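/- Let k ≥ 1 and consider the 2k points ξ_i = e_i and ξ_{k+i} = −e_i (i = 1,…,k) in ℝ^k under the 1-norm. Then ∑_{i=1}^{2k} ‖ξ_i − 0‖₁ = 2k, while for every j ∈ {1,…,2k}, ∑_{i=1}^{2k} ‖ξ_i − ξ_j‖₁ = 2(2k − 1). Consequently min_j (1/(2k))∑_i ‖ξ_i − ξ_j‖₁ = 2(1 − 1/(2k)) · (1/(2k))∑_i ‖ξ_i − 0‖₁ / 1. -/
import Mathlib

theorem stmt13 (k : ℕ) (hk : 1 ≤ k) (ξ : Fin (2 * k) → Fin k → ℝ)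
    (hξ : ∀ i t, ξ i t =
      if (i : ℕ) < k then (if (t : ℕ) = (i : ℕ) then 1 else 0)
      else (if (t : ℕ) = (i : ℕ) - k then -1 else 0)) :
    (∑ i, ∑ t, |ξ i t| = 2 * (k : ℝ))
    ∧ (∀ j, ∑ i, ∑ t, |ξ i t - ξ j t| = 2 * (2 * (k : ℝ) - 1))
    ∧ ((⨅ j : Fin (2 * k), (1 / (2 * (k : ℝ))) * ∑ i, ∑ t, |ξ i t - ξ j t|)
        = 2 * (1 - 1 / (2 * (k : ℝ))) * ((1 / (2 * (k : ℝ))) * ∑ i, ∑ t, |ξ i t|)) := by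
  have hcoord : ∀ i : Fin (2 * k), (if (i : ℕ) < k then (i : ℕ) else (i : ℕ) - k) < k := by
    intro i
    have := i.isLt
    by_cases h : (i : ℕ) < k <;> simp [h] <;> omega
  set a : Fin (2 * k) → Fin k := fun i => ⟨_, hcoord i⟩ with ha
  set s : Fin (2 * k) → ℝ := fun i => if (i : ℕ) < k then 1 else -1 with hs
  have hform : ∀ i t, ξ i t = if t = a i then s i else 0 := by
    intro i t
    rw [hξ]
    by_cases h : (i : ℕ) < k <;> simp [ha, hs, h, Fin.ext_iff]
  have hsabs : ∀ i, |s i| = 1 := by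
    intro i; by_cases h : (i : ℕ) < k <;> simp [hs, h]
  have hrow : ∀ i, ∑ t, |ξ i t| = 1 := by
    intro i
    have : ∀ t, |ξ i t| = if t = a i then 1 else 0 := by
      intro t; rw [hform]
      by_cases h : t = a i <;> simp [h, hsabs]
    simp [this]
  have hdiff : ∀ i j, i ≠ j → ∑ t, |ξ i t - ξ j t| = 2 := by
    intro i j hij
    by_cases hac : a i = a j
    · have hsij : |s i - s j| = 2 := by
        have hval : (if (i : ℕ) < k then (i : ℕ) else (i : ℕ) - k)
            = (if (j : ℕ) < k then (j : ℕ) else (j : ℕ) - k) := by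
          have := congrArg Fin.val hac
          simpa [ha] using this
        have hi := i.isLt; have hj := j.isLt
        have hij' : (i : ℕ) ≠ (j : ℕ) := fun h => hij (Fin.ext h)
        by_cases h : (i : ℕ) < k <;> by_cases h' : (j : ℕ) < k
        · simp only [h, h', if_true] at hval; exact absurd hval hij'
        · norm_num [hs, h, h']
        · norm_num [hs, h, h']
        · simp only [h, h', if_false] at hval; exfalso; omega
      have : ∀ t, |ξ i t - ξ j t| = if t = a i then 2 else 0 := by
        intro t
        rw [hform, hform, ← hac]
        by_cases h : t = a i <;> simp [h, hsij]
      simp [this]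
    · have hac' : a j ≠ a i := Ne.symm hac
      have : ∀ t, |ξ i t - ξ j t| = |ξ i t| + |ξ j t| := by
        intro t
        rw [hform, hform]
        by_cases h1 : t = a i
        · have h2 : t ≠ a j := by rw [h1]; exact hac
          simp [h1, h2, hac, hac']
        · by_cases h2 : t = a j <;> simp [h1, h2, hac, hac']
      rw [Finset.sum_congr rfl (fun t _ => this t), Finset.sum_add_distrib, hrow, hrow]
      norm_num
  have part1 : ∑ i, ∑ t, |ξ i t| = 2 * (k : ℝ) := by
    simp [hrow]
  have part2 : ∀ j, ∑ i, ∑ t, |ξ i t - ξ j t| = 2 * (2 * (k : ℝ) - 1) := by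
    intro j
    rw [← Finset.sum_erase_add _ _ (Finset.mem_univ j)]
    have hj : ∑ t, |ξ j t - ξ j t| = 0 := by simp
    rw [hj, add_zero]
    rw [Finset.sum_congr rfl (fun i hi => hdiff i j (Finset.ne_of_mem_erase hi))]
    rw [Finset.sum_const]
    simp [Finset.card_erase_of_mem]
    have h2k : 1 ≤ 2 * k := by omega
    push_cast [Nat.cast_sub h2k]
    ring
  refine ⟨part1, part2, ?_⟩
  have hne : Nonempty (Fin (2 * k)) := ⟨⟨0, by omega⟩⟩
  simp only [part2, part1, ciInf_const]
  have hk0 : (2 * (k : ℝ)) ≠ 0 := by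
    have : (0:ℝ) < (k:ℝ) := by exact_mod_cast hk
    positivity
  field_simp
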